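/- Suppose n = [L:K] = 2m+1 is odd and σ_0 = 1, σ_1, …, σ_m ∈ G are such that G = {1, σ_1, σ_1⁻¹, …, σ_m, σ_m⁻¹} is a listing of G without repetitions. Then the space Sym_K(L) of symmetric K-bilinear forms on L is the internal direct sum A^{σ_0} ⊕ A^{σ_1} ⊕ ⋯ ⊕ A^{σ_m}; moreover each A^{σ_i} has K-dimension n and every nonzero form belonging to any A^{σ_i} is nondegenerate. -/

import Mathlib

open Module

noncomputable def phi (K L : Type*) [Field K] [Field L] [Algebra K L]
    (b : L) (σ : L ≃ₐ[K] L) : L →ₗ[K] L →ₗ[K] K :=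
  (Algebra.traceForm K L).compl₁₂ (LinearMap.mulLeft K b) σ.toLinearMap +
    (Algebra.traceForm K L).compl₁₂ ((LinearMap.mulLeft K b).comp σ.toLinearMap) LinearMap.id

noncomputable def Asub (K L : Type*) [Field K] [Field L] [Algebra K L]
    (σ : L ≃ₐ[K] L) : Submodule K (L →ₗ[K] L →ₗ[K] K) :=
  Submodule.span K (Set.range fun b : L => phi K L b σ)

def symSubmodule (K L : Type*) [Field K] [Field L] [Algebra K L] :
    Submodule K (L →ₗ[K] L →ₗ[K] K) where
  carrier := {B | ∀ x y : L, B x y = B y x}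
  add_mem' := by
    intro B C hB hC x y
    simp [hB x y, hC x y]
  zero_mem' := by intro x y; simp
  smul_mem' := by
    intro c B hB x y
    simp [hB x y]

set_option linter.unusedSectionVars false

section Aux

variable (K L : Type*) [Field K] [Field L] [Algebra K L]

lemma apply_inv_cancel (σ : L ≃ₐ[K] L) (x : L) : σ (σ⁻¹ x) = x := by
  rw [← AlgEquiv.mul_apply, mul_inv_cancel, AlgEquiv.one_apply]

lemma inv_apply_cancel (σ : L ≃ₐ[K] L) (x : L) : σ⁻¹ (σ x) = x := by
  rw [← AlgEquiv.mul_apply, inv_mul_cancel, AlgEquiv.one_apply]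

lemma phi_apply (b : L) (σ : L ≃ₐ[K] L) (x y : L) :
    phi K L b σ x y = Algebra.trace K L (b * x * σ y) + Algebra.trace K L (b * σ x * y) := by
  simp [phi, Algebra.traceForm_apply, mul_assoc]

lemma phi_symm (b : L) (σ : L ≃ₐ[K] L) (x y : L) :
    phi K L b σ x y = phi K L b σ y x := by
  rw [phi_apply, phi_apply, add_comm]
  congr 2 <;> ring

lemma phi_zero (σ : L ≃ₐ[K] L) : phi K L 0 σ = 0 := by
  ext x y
  simp [phi_apply]

/-- ψ_{c,τ}, as a linear map in `c`. -/
noncomputable def psiL (τ : L ≃ₐ[K] L) : L →ₗ[K] (L →ₗ[K] L →ₗ[K] K) where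
  toFun c := (Algebra.traceForm K L).compl₁₂ (LinearMap.mulLeft K c) τ.toLinearMap
  map_add' c d := by
    ext x y
    simp [Algebra.traceForm_apply, add_mul]
  map_smul' a c := by
    ext x y
    simp [Algebra.traceForm_apply, Algebra.smul_mul_assoc]

lemma psiL_apply (τ : L ≃ₐ[K] L) (c x y : L) :
    psiL K L τ c x y = Algebra.trace K L (c * x * τ y) := by
  simp [psiL, Algebra.traceForm_apply]

variable [FiniteDimensional K L]

noncomputable def Theta :
    ((L ≃ₐ[K] L) → L) →ₗ[K] (L →ₗ[K] L →ₗ[K] K) :=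
  ∑ τ : L ≃ₐ[K] L, (psiL K L τ).comp (LinearMap.proj τ)

lemma Theta_apply (d : (L ≃ₐ[K] L) → L) (x y : L) :
    Theta K L d x y = ∑ τ : L ≃ₐ[K] L, Algebra.trace K L (d τ * x * τ y) := by
  simp [Theta, LinearMap.sum_apply, psiL_apply]

variable [IsGalois K L]

lemma aut_li : LinearIndependent L (fun (τ : L ≃ₐ[K] L) => (τ : L → L)) := by
  have h := linearIndependent_monoidHom L L
  exact h.comp (fun τ : L ≃ₐ[K] L => (τ : L →* L))
    (fun a b hab => by
      ext x
      exact DFunLike.congr_fun hab x)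

lemma key_inj (d : (L ≃ₐ[K] L) → L)
    (h : ∀ x y : L, ∑ τ : L ≃ₐ[K] L, Algebra.trace K L (d τ * x * τ y) = 0) :
    d = 0 := by
  have h1 : ∀ y : L, ∑ τ : L ≃ₐ[K] L, d τ * τ y = 0 := by
    intro y
    have hne := traceForm_nondegenerate K L
    apply hne.1
    intro x
    rw [Algebra.traceForm_apply]
    rw [Finset.sum_mul, map_sum, ← h x y]
    exact Finset.sum_congr rfl fun τ _ => by rw [mul_right_comm]
  have hli := Fintype.linearIndependent_iff.mp (aut_li K L) d
  apply funext
  intro τ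
  apply hli _ τ
  funext y
  simpa [Finset.sum_apply] using h1 y

lemma Theta_injective : Function.Injective (Theta K L) := by
  rw [injective_iff_map_eq_zero]
  intro d hd
  apply key_inj K L d
  intro x y
  rw [← Theta_apply, hd]
  simp

lemma Theta_surjective : Function.Surjective (Theta K L) := by
  have hfr : finrank K ((L ≃ₐ[K] L) → L) = finrank K (L →ₗ[K] L →ₗ[K] K) := by
    rw [Module.finrank_pi_fintype, Module.finrank_linearMap, Module.finrank_linearMap,
      finrank_self, mul_one]
    simp [Finset.sum_const, ← Nat.card_eq_fintype_card, IsGalois.card_aut_eq_finrank K L, mul_comm]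
  exact (LinearMap.injective_iff_surjective_of_finrank_eq_finrank (K := K)
    (V := (L ≃ₐ[K] L) → L) (V₂ := L →ₗ[K] L →ₗ[K] K) hfr).mp
    (Theta_injective K L)

end Aux
section Aux2

variable (K L : Type*) [Field K] [Field L] [Algebra K L]

lemma trace_inv_twist (σ : L ≃ₐ[K] L) (b x y : L) :
    Algebra.trace K L (σ⁻¹ b * x * σ⁻¹ y) = Algebra.trace K L (b * σ x * y) := by
  rw [← Algebra.trace_eq_of_algEquiv σ (σ⁻¹ b * x * σ⁻¹ y)]
  congr 1
  rw [map_mul, map_mul, apply_inv_cancel, apply_inv_cancel]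

open scoped Classical in
noncomputable def wmap (σ : L ≃ₐ[K] L) : L →ₗ[K] ((L ≃ₐ[K] L) → L) where
  toFun b τ := (if τ = σ then b else 0) + (if τ = σ⁻¹ then σ⁻¹ b else 0)
  map_add' b c := by
    funext τ
    simp only [Pi.add_apply, map_add]
    split_ifs <;> ring
  map_smul' a b := by
    funext τ
    simp only [Pi.smul_apply, map_smul, RingHom.id_apply]
    split_ifs <;> simp

lemma wmap_apply (σ : L ≃ₐ[K] L) (b : L) (τ : L ≃ₐ[K] L) [Decidable (τ = σ)]
    [Decidable (τ = σ⁻¹)] :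
    wmap K L σ b τ = (if τ = σ then b else 0) + (if τ = σ⁻¹ then σ⁻¹ b else 0) := by
  simp [wmap]
  split_ifs <;> simp_all

variable [FiniteDimensional K L] [IsGalois K L]

lemma Theta_wmap (σ : L ≃ₐ[K] L) (b : L) :
    Theta K L (wmap K L σ b) = phi K L b σ := by
  classical
  ext x y
  rw [Theta_apply, phi_apply]
  have hterm : ∀ τ : L ≃ₐ[K] L, Algebra.trace K L (wmap K L σ b τ * x * τ y)
      = (if τ = σ then Algebra.trace K L (b * x * τ y) else 0)
      + (if τ = σ⁻¹ then Algebra.trace K L (σ⁻¹ b * x * τ y) else 0) := by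
    intro τ
    rw [wmap_apply]
    split_ifs <;> simp [add_mul, mul_assoc]
  rw [Finset.sum_congr rfl fun τ _ => hterm τ, Finset.sum_add_distrib,
    Finset.sum_ite_eq' Finset.univ σ, Finset.sum_ite_eq' Finset.univ σ⁻¹,
    if_pos (Finset.mem_univ _), if_pos (Finset.mem_univ _), trace_inv_twist]

lemma Asub_eq (σ : L ≃ₐ[K] L) :
    Asub K L σ = LinearMap.range ((Theta K L).comp (wmap K L σ)) := by
  apply le_antisymm
  · rw [Asub, Submodule.span_le]
    rintro _ ⟨b, rfl⟩
    exact ⟨b, Theta_wmap K L σ b⟩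
  · rintro _ ⟨b, rfl⟩
    rw [LinearMap.comp_apply, Theta_wmap]
    exact Submodule.subset_span ⟨b, rfl⟩

/-- Submodule of functions supported inside `S`. -/
def suppSub (S : Set (L ≃ₐ[K] L)) : Submodule K ((L ≃ₐ[K] L) → L) where
  carrier := {d | ∀ τ ∉ S, d τ = 0}
  add_mem' := by intro a b ha hb τ hτ; simp [ha τ hτ, hb τ hτ]
  zero_mem' := by intro τ _; rfl
  smul_mem' := by intro c a ha τ hτ; simp [ha τ hτ]

lemma suppSub_mono {S T : Set (L ≃ₐ[K] L)} (h : S ⊆ T) : suppSub K L S ≤ suppSub K L T :=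
  fun d hd τ hτ => hd τ (fun hs => hτ (h hs))

lemma suppSub_disjoint {S T : Set (L ≃ₐ[K] L)} (h : Disjoint S T) :
    Disjoint (suppSub K L S) (suppSub K L T) := by
  rw [Submodule.disjoint_def]
  intro d hS hT
  funext τ
  by_cases hτ : τ ∈ S
  · exact hT τ (fun ht => (Set.disjoint_left.mp h) hτ ht)
  · exact hS τ hτ

lemma wmap_range_le (σ : L ≃ₐ[K] L) :
    LinearMap.range (wmap K L σ) ≤ suppSub K L {σ, σ⁻¹} := by
  classical
  rintro _ ⟨b, rfl⟩ τ hτ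
  simp only [Set.mem_insert_iff, Set.mem_singleton_iff, not_or] at hτ
  rw [wmap_apply, if_neg hτ.1, if_neg hτ.2, add_zero]

end Aux2
section Aux3

variable (K L : Type*) [Field K] [Field L] [Algebra K L] [FiniteDimensional K L] [IsGalois K L]

lemma phi_nondeg (h2L : (2 : L) ≠ 0) (hodd : Odd (finrank K L)) (σ : L ≃ₐ[K] L)
    {b : L} (hb : b ≠ 0) (x : L) (hx : ∀ y, phi K L b σ x y = 0) : x = 0 := by
  -- Step 1: the relation σ⁻¹(b x) + b σ(x) = 0
  have e1 : ∀ y : L, Algebra.trace K L (σ⁻¹ (b * x) * y) = Algebra.trace K L (b * x * σ y) := by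
    intro y
    rw [← Algebra.trace_eq_of_algEquiv σ (σ⁻¹ (b * x) * y), map_mul, apply_inv_cancel, mul_assoc]
  have hrel : σ⁻¹ (b * x) + b * σ x = 0 := by
    apply (traceForm_nondegenerate K L).1
    intro y
    rw [Algebra.traceForm_apply, add_mul, map_add, e1 y]
    have := hx y
    rw [phi_apply] at this
    convert this using 3 <;> ring
  -- Step 2: b x = -(σ b · σ² x)
  have hkey : b * x = -(σ b * (σ ^ 2 : L ≃ₐ[K] L) x) := by
    have := congrArg σ hrel
    rw [map_add, apply_inv_cancel, map_mul, map_zero] at this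
    have h2 : σ (σ x) = (σ ^ 2 : L ≃ₐ[K] L) x := by
      rw [sq, AlgEquiv.mul_apply]
    rw [h2] at this
    exact eq_neg_of_add_eq_zero_left this
  by_contra hx0
  set u : L := -(σ b) * b⁻¹ with hu
  have hx2 : x = u * (σ ^ 2 : L ≃ₐ[K] L) x := by
    have hb' : b⁻¹ * b = 1 := inv_mul_cancel₀ hb
    calc x = b⁻¹ * (b * x) := by rw [← mul_assoc, hb', one_mul]
      _ = b⁻¹ * (-(σ b * (σ ^ 2 : L ≃ₐ[K] L) x)) := by rw [hkey]
      _ = u * (σ ^ 2 : L ≃ₐ[K] L) x := by rw [hu]; ring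
  -- Step 3: iteration
  have hiter : ∀ k : ℕ, x = (∏ j ∈ Finset.range k, (σ ^ (2 * j) : L ≃ₐ[K] L) u) *
      (σ ^ (2 * k) : L ≃ₐ[K] L) x := by
    intro k
    induction k with
    | zero => simp
    | succ k ih =>
      have happ : (σ ^ (2 * k) : L ≃ₐ[K] L) x
          = (σ ^ (2 * k) : L ≃ₐ[K] L) u * (σ ^ (2 * (k + 1)) : L ≃ₐ[K] L) x := by
        have hexp : (2 : ℕ) * k + 2 = 2 * (k + 1) := by ring
        calc (σ ^ (2 * k) : L ≃ₐ[K] L) x = (σ ^ (2 * k) : L ≃ₐ[K] L) (u * (σ ^ 2 : L ≃ₐ[K] L) x) := by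
              rw [← hx2]
          _ = (σ ^ (2 * k) : L ≃ₐ[K] L) u * (σ ^ (2 * k) : L ≃ₐ[K] L) ((σ ^ 2 : L ≃ₐ[K] L) x) :=
              map_mul _ _ _
          _ = (σ ^ (2 * k) : L ≃ₐ[K] L) u * (σ ^ (2 * (k + 1)) : L ≃ₐ[K] L) x := by
              rw [← AlgEquiv.mul_apply, ← pow_add, hexp]
      rw [Finset.prod_range_succ]
      calc x = (∏ j ∈ Finset.range k, (σ ^ (2 * j) : L ≃ₐ[K] L) u) *
          (σ ^ (2 * k) : L ≃ₐ[K] L) x := ih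
        _ = _ := by rw [happ]; ring
  set d : ℕ := orderOf σ with hd
  have hd0 : 0 < d := orderOf_pos σ
  have hdodd : Odd d := by
    have hdvd : d ∣ finrank K L := by
      rw [← IsGalois.card_aut_eq_finrank K L]
      exact orderOf_dvd_natCard σ
    rcases Nat.even_or_odd d with he | ho
    · exfalso
      exact (Nat.not_even_iff_odd.mpr hodd) (even_iff_two_dvd.mpr (dvd_trans he.two_dvd hdvd))
    · exact ho
  have hpow_d : (σ ^ (2 * d) : L ≃ₐ[K] L) = 1 := by
    rw [mul_comm, pow_mul, pow_orderOf_eq_one, one_pow]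
  have hP1 : (∏ j ∈ Finset.range d, (σ ^ (2 * j) : L ≃ₐ[K] L) u) = 1 := by
    have h := hiter d
    rw [hpow_d, AlgEquiv.one_apply] at h
    exact mul_right_cancel₀ hx0 (by rw [one_mul, ← h])
  -- Step 4: reindex the product
  obtain ⟨c, hc⟩ := id hdodd
  have he2 : 2 * (c + 1) = d + 1 := by omega
  set e : ℕ := c + 1 with heq
  have hmodinv : ∀ a j : ℕ, j < d → a * (d + 1) % d = a % d → True := fun _ _ _ _ => trivial
  have hP2 : (∏ j ∈ Finset.range d, (σ ^ (2 * j) : L ≃ₐ[K] L) u)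
      = ∏ j ∈ Finset.range d, (σ ^ j : L ≃ₐ[K] L) u := by
    refine Finset.prod_nbij' (fun j => 2 * j % d) (fun j => e * j % d) ?_ ?_ ?_ ?_ ?_
    · intro a _; exact Finset.mem_range.mpr (Nat.mod_lt _ hd0)
    · intro a _; exact Finset.mem_range.mpr (Nat.mod_lt _ hd0)
    · intro a ha
      have ha' := Finset.mem_range.mp ha
      calc e * (2 * a % d) % d = e * (2 * a) % d := by
            conv_lhs => rw [Nat.mul_mod, Nat.mod_mod_of_dvd _ dvd_rfl]
            rw [← Nat.mul_mod]
        _ = ((d + 1) * a) % d := by rw [← mul_assoc, ← he2]; ring_nf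
        _ = (d * a + a) % d := by ring_nf
        _ = a % d := by rw [Nat.mul_add_mod]
        _ = a := Nat.mod_eq_of_lt ha'
    · intro a ha
      have ha' := Finset.mem_range.mp ha
      calc 2 * (e * a % d) % d = 2 * (e * a) % d := by
            conv_lhs => rw [Nat.mul_mod, Nat.mod_mod_of_dvd _ dvd_rfl]
            rw [← Nat.mul_mod]
        _ = ((d + 1) * a) % d := by rw [← mul_assoc, he2]
        _ = (d * a + a) % d := by ring_nf
        _ = a % d := by rw [Nat.mul_add_mod]
        _ = a := Nat.mod_eq_of_lt ha'
    · intro a _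
      exact (DFunLike.congr_fun (pow_mod_orderOf σ (2 * a)) u).symm
  -- Step 5: telescoping
  have hfne : ∀ j : ℕ, (σ ^ j : L ≃ₐ[K] L) b ≠ 0 := by
    intro j h
    exact hb ((σ ^ j : L ≃ₐ[K] L).injective (by rw [h, map_zero]))
  have hterm : ∀ j : ℕ, (σ ^ j : L ≃ₐ[K] L) u
      = -1 * ((σ ^ (j + 1) : L ≃ₐ[K] L) b * ((σ ^ j : L ≃ₐ[K] L) b)⁻¹) := by
    intro j
    rw [hu, map_mul, map_neg, map_inv₀]
    have : (σ ^ j : L ≃ₐ[K] L) (σ b) = (σ ^ (j + 1) : L ≃ₐ[K] L) b := by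
      rw [pow_succ, AlgEquiv.mul_apply]
    rw [this]; ring
  have hshift : (∏ j ∈ Finset.range d, (σ ^ (j + 1) : L ≃ₐ[K] L) b)
      = ∏ j ∈ Finset.range d, (σ ^ j : L ≃ₐ[K] L) b := by
    have h1 : (∏ j ∈ Finset.range d, (σ ^ (j + 1) : L ≃ₐ[K] L) b) * (σ ^ 0 : L ≃ₐ[K] L) b
        = (∏ j ∈ Finset.range d, (σ ^ j : L ≃ₐ[K] L) b) * (σ ^ d : L ≃ₐ[K] L) b := by
      rw [← Finset.prod_range_succ' (fun j => (σ ^ j : L ≃ₐ[K] L) b) d,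
        ← Finset.prod_range_succ (fun j => (σ ^ j : L ≃ₐ[K] L) b) d]
    have h2 : (σ ^ d : L ≃ₐ[K] L) b = (σ ^ 0 : L ≃ₐ[K] L) b := by
      rw [pow_orderOf_eq_one, pow_zero]
    rw [h2] at h1
    exact mul_right_cancel₀ (hfne 0) h1
  have hP3 : (∏ j ∈ Finset.range d, (σ ^ j : L ≃ₐ[K] L) u) = -1 := by
    calc (∏ j ∈ Finset.range d, (σ ^ j : L ≃ₐ[K] L) u)
        = ∏ j ∈ Finset.range d,
            (-1 * ((σ ^ (j + 1) : L ≃ₐ[K] L) b * ((σ ^ j : L ≃ₐ[K] L) b)⁻¹)) :=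
          Finset.prod_congr rfl fun j _ => hterm j
      _ = (-1 : L) ^ d * ((∏ j ∈ Finset.range d, (σ ^ (j + 1) : L ≃ₐ[K] L) b) *
            (∏ j ∈ Finset.range d, (σ ^ j : L ≃ₐ[K] L) b)⁻¹) := by
          rw [Finset.prod_mul_distrib, Finset.prod_mul_distrib, Finset.prod_const,
            Finset.card_range, Finset.prod_inv_distrib]
      _ = (-1 : L) ^ d := by
          rw [hshift, mul_inv_cancel₀ (Finset.prod_ne_zero_iff.mpr fun j _ => hfne j), mul_one]
      _ = -1 := Odd.neg_one_pow hdodd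
  rw [hP2, hP3] at hP1
  apply h2L
  linear_combination -hP1

end Aux3
/-- Suppose `n = [L:K] = 2m+1` is odd and `σ_0 = 1, σ_1, …, σ_m ∈ G` are such
that `G = {1, σ_1, σ_1⁻¹, …, σ_m, σ_m⁻¹}` is a listing of `G` without repetitions.  Then
`Sym_K(L) = A^{σ_0} ⊕ A^{σ_1} ⊕ ⋯ ⊕ A^{σ_m}` (an internal direct sum); moreover each
`A^{σ_i}` has `K`-dimension `n`, and every nonzero form belonging to any `A^{σ_i}` is
nondegenerate. -/
theorem sym_direct_sum_odd (K L : Type*) [Field K] [Field L] [Algebra K L]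
    [FiniteDimensional K L] [IsGalois K L] (h2 : (2 : K) ≠ 0)
    (n m : ℕ) (hn : finrank K L = n) (hnm : n = 2 * m + 1)
    (σs : Fin (m + 1) → (L ≃ₐ[K] L)) (hσ0 : σs 0 = 1)
    (hcover : ∀ τ : L ≃ₐ[K] L, ∃ i, τ = σs i ∨ τ = (σs i)⁻¹)
    (hdisj : ∀ i j, i ≠ j → σs i ≠ σs j ∧ σs i ≠ (σs j)⁻¹)
    (hself : ∀ i, i ≠ 0 → σs i ≠ (σs i)⁻¹) :
    iSupIndep (fun i => Asub K L (σs i)) ∧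
    (⨆ i, Asub K L (σs i)) = symSubmodule K L ∧
    (∀ i, finrank K (Asub K L (σs i)) = n) ∧
    (∀ i, ∀ B ∈ Asub K L (σs i), B ≠ 0 →
      ∀ x : L, (∀ y : L, B x y = 0) → x = 0) := by
  classical
  have h2L : (2 : L) ≠ 0 := by
    intro h
    apply h2
    apply (algebraMap K L).injective
    rw [map_zero, map_ofNat, h]
  set S : Fin (m + 1) → Set (L ≃ₐ[K] L) := fun i => {σs i, (σs i)⁻¹} with hS
  have hSdisj : ∀ i j, i ≠ j → Disjoint (S i) (S j) := by
    intro i j hij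
    have h1 := hdisj i j hij
    have h2' := hdisj j i hij.symm
    rw [Set.disjoint_left]
    intro a ha hb
    simp only [hS, Set.mem_insert_iff, Set.mem_singleton_iff] at ha hb
    rcases ha with rfl | rfl <;> rcases hb with h | h
    · exact h1.1 h
    · exact h1.2 h
    · exact h2'.2 h.symm
    · exact h1.1 (inv_injective h)
  have hW : ∀ i, Asub K L (σs i) ≤ Submodule.map (Theta K L) (suppSub K L (S i)) := by
    intro i
    rw [Asub_eq, LinearMap.range_comp]
    exact Submodule.map_mono (wmap_range_le K L (σs i))
  have hindep : iSupIndep (fun i => Asub K L (σs i)) := by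
    intro i
    have hcore : Disjoint (Submodule.map (Theta K L) (suppSub K L (S i)))
        (Submodule.map (Theta K L) (suppSub K L (S i)ᶜ)) := by
      rw [disjoint_iff, ← Submodule.map_inf _ (Theta_injective K L),
        disjoint_iff.mp (suppSub_disjoint K L disjoint_compl_right), Submodule.map_bot]
    refine Disjoint.mono (hW i) ?_ hcore
    refine iSup_le fun j => iSup_le fun hj => ?_
    refine le_trans (hW j) (Submodule.map_mono (suppSub_mono K L ?_))
    exact Set.subset_compl_iff_disjoint_left.mpr (hSdisj i j (Ne.symm hj))
  have hodd : Odd (finrank K L) := by rw [hn, hnm]; exact ⟨m, rfl⟩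
  refine ⟨hindep, ?_, ?_, ?_⟩
  · -- sup = symSubmodule
    apply le_antisymm
    · refine iSup_le fun i => ?_
      rw [Asub, Submodule.span_le]
      rintro _ ⟨b, rfl⟩
      exact fun x y => phi_symm K L b (σs i) x y
    · intro B hB
      obtain ⟨d, rfl⟩ := Theta_surjective K L B
      have hBsym : ∀ x y : L, Theta K L d x y = Theta K L d y x := hB
      have hrel : ∀ τ : L ≃ₐ[K] L, d τ = τ (d τ⁻¹) := by
        have h0 : (fun τ : L ≃ₐ[K] L => d τ - τ (d τ⁻¹)) = 0 := by
          apply key_inj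
          intro x y
          have hexp : ∀ τ : L ≃ₐ[K] L, Algebra.trace K L ((d τ - τ (d τ⁻¹)) * x * τ y)
              = Algebra.trace K L (d τ * x * τ y)
                - Algebra.trace K L (τ (d τ⁻¹) * x * τ y) := by
            intro τ
            rw [sub_mul, sub_mul, map_sub]
          rw [Finset.sum_congr rfl fun τ _ => hexp τ, Finset.sum_sub_distrib]
          have hsnd : ∑ τ : L ≃ₐ[K] L, Algebra.trace K L (τ (d τ⁻¹) * x * τ y)
              = Theta K L d y x := by
            rw [Theta_apply]
            refine Fintype.sum_equiv (Equiv.inv (L ≃ₐ[K] L)) _ _ fun τ => ?_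
            simp only [Equiv.inv_apply]
            calc Algebra.trace K L (τ (d τ⁻¹) * x * τ y)
                = Algebra.trace K L (τ (d τ⁻¹ * τ⁻¹ x * y)) := by
                  congr 1
                  rw [map_mul, map_mul, apply_inv_cancel]
              _ = Algebra.trace K L (d τ⁻¹ * τ⁻¹ x * y) := Algebra.trace_eq_of_algEquiv τ _
              _ = Algebra.trace K L (d τ⁻¹ * y * τ⁻¹ x) := by congr 1; ring
          rw [hsnd, ← Theta_apply, hBsym x y, sub_self]
        intro τ
        have := congrFun h0 τ
        simpa [sub_eq_zero] using this
      set c : Fin (m + 1) → L := fun i => if i = 0 then d 1 * (2 : L)⁻¹ else d (σs i) with hc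
      have hc0 : c 0 = d 1 * (2 : L)⁻¹ := if_pos rfl
      have hci : ∀ j : Fin (m + 1), j ≠ 0 → c j = d (σs j) := fun j hj => if_neg hj
      have hsum : (∑ i, wmap K L (σs i) (c i)) = d := by
        funext τ
        rw [Finset.sum_apply]
        obtain ⟨i, hi⟩ := hcover τ
        have hτSi : τ ∈ S i := by rcases hi with rfl | rfl <;> simp [hS]
        rw [Finset.sum_eq_single i]
        · by_cases hi0 : i = 0
          · subst hi0
            rw [hσ0] at hi ⊢
            have hτ1 : τ = 1 := by rcases hi with rfl | rfl <;> simp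
            subst hτ1
            rw [wmap_apply]
            rw [if_pos rfl, if_pos (by rw [inv_one]), inv_one, AlgEquiv.one_apply]
            rw [hc0]
            have h22 : d 1 * (2 : L)⁻¹ + d 1 * (2 : L)⁻¹ = d 1 * ((2 : L) * (2 : L)⁻¹) := by ring
            rw [h22, mul_inv_cancel₀ h2L, mul_one]
          · rcases hi with rfl | rfl
            · rw [wmap_apply, if_pos rfl, if_neg (hself i hi0), add_zero, hci i hi0]
            · rw [wmap_apply, if_neg (Ne.symm (hself i hi0)), if_pos rfl, zero_add, hci i hi0]
              rw [hrel (σs i)⁻¹, inv_inv]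
        · intro j _ hji
          have hτj : τ ∉ S j := Set.disjoint_left.mp (hSdisj i j (Ne.symm hji)) hτSi
          simp only [hS, Set.mem_insert_iff, Set.mem_singleton_iff, not_or] at hτj
          rw [wmap_apply, if_neg hτj.1, if_neg hτj.2, add_zero]
        · intro h; exact absurd (Finset.mem_univ i) h
      rw [← hsum, map_sum]
      refine Submodule.sum_mem _ fun i _ => ?_
      rw [Theta_wmap]
      exact Submodule.mem_iSup_of_mem i (Submodule.subset_span ⟨c i, rfl⟩)
  · -- finrank
    intro i
    have hinj : Function.Injective ((Theta K L).comp (wmap K L (σs i))) := by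
      intro a b hab
      have h : wmap K L (σs i) a = wmap K L (σs i) b := Theta_injective K L hab
      by_cases hi0 : i = 0
      · subst hi0
        rw [hσ0] at h
        have h1 := congrFun h 1
        rw [wmap_apply, wmap_apply] at h1
        simp only [inv_one, if_true, eq_self_iff_true, AlgEquiv.one_apply] at h1
        have h2' : (2 : L) * a = (2 : L) * b := by linear_combination h1
        exact mul_left_cancel₀ h2L h2'
      · have h1 := congrFun h (σs i)
        rw [wmap_apply, wmap_apply, if_pos rfl, if_pos rfl,
          if_neg (hself i hi0), if_neg (hself i hi0), add_zero, add_zero] at h1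
        exact h1
    rw [Asub_eq, LinearMap.finrank_range_of_inj hinj, hn]
  · -- nondegeneracy
    intro i B hB hB0 x hx
    rw [Asub_eq] at hB
    obtain ⟨b, rfl⟩ := hB
    have hphi : (Theta K L).comp (wmap K L (σs i)) b = phi K L b (σs i) := Theta_wmap K L (σs i) b
    have hb : b ≠ 0 := by
      rintro rfl
      apply hB0
      rw [hphi]
      exact phi_zero K L (σs i)
    refine phi_nondeg K L h2L hodd (σs i) hb x fun y => ?_
    rw [← hphi]
    exact hx y
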